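/- Let c₅ ∈ ℝ and H(u,v) = e^{−2v}(u² − v − 1/2 − c₅). For every h < 0, the level set {(u,v) ∈ ℝ² : H(u,v) = h} is a bounded subset of ℝ². (These level sets carry the closed periodic orbits of the unperturbed blow-up system.) -/
import Mathlib


open Real

/-- Hamiltonian of the unperturbed blow-up system. -/
noncomputable def Ham (c₅ u v : ℝ) : ℝ :=
  Real.exp (-2 * v) * (u ^ 2 - v - 1 / 2 - c₅)

/-- Negative level sets of the Hamiltonian are bounded: they carry the closed
periodic orbits of the unperturbed blow-up system. -/
theorem ham_negative_level_sets_bounded (c₅ : ℝ) :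
    ∀ h : ℝ, h < 0 →
      Bornology.IsBounded {p : ℝ × ℝ | Ham c₅ p.1 p.2 = h} := by
  intro h hh
  have hB : Bornology.IsBounded
      ((Set.Icc (-(1 + (2 * (1/2 + c₅) - Real.log (-h))))
          (1 + (2 * (1/2 + c₅) - Real.log (-h)))) ×ˢ
        (Set.Icc (-(1/2 + c₅)) ((1/2 + c₅) - Real.log (-h)))) :=
    (Metric.isBounded_Icc _ _).prod (Metric.isBounded_Icc _ _)
  refine hB.subset ?_
  rintro ⟨u, v⟩ hp
  simp only [Set.mem_setOf_eq, Ham] at hp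
  have hexp : (0:ℝ) < Real.exp (-2 * v) := Real.exp_pos _
  have hexp2 : (0:ℝ) < Real.exp (2 * v) := Real.exp_pos _
  have h1 : Real.exp (-2 * v) * Real.exp (2 * v) = 1 := by
    rw [← Real.exp_add]; norm_num
  have key : u ^ 2 - v - (1/2 + c₅) = h * Real.exp (2 * v) := by
    linear_combination Real.exp (2 * v) * hp - (u ^ 2 - v - 1/2 - c₅) * h1
  have hneg : u ^ 2 - v - (1/2 + c₅) < 0 := by
    rw [key]; exact mul_neg_of_neg_of_pos hh hexp2
  have hv1 : -(1/2 + c₅) ≤ v := by nlinarith [sq_nonneg u]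
  -- upper bound on v
  have hub : -h ≤ Real.exp (-2 * v) * (v + (1/2 + c₅)) := by
    nlinarith [mul_nonneg hexp.le (sq_nonneg u)]
  have hx : v + (1/2 + c₅) ≤ Real.exp (v + (1/2 + c₅)) := by
    linarith [Real.add_one_le_exp (v + (1/2 + c₅))]
  have hub2 : -h ≤ Real.exp ((1/2 + c₅) - v) := by
    have h2 : Real.exp (-2 * v) * (v + (1/2 + c₅)) ≤
        Real.exp (-2 * v) * Real.exp (v + (1/2 + c₅)) :=
      mul_le_mul_of_nonneg_left hx hexp.le
    have h3 : Real.exp (-2 * v) * Real.exp (v + (1/2 + c₅)) =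
        Real.exp ((1/2 + c₅) - v) := by
      rw [← Real.exp_add]; ring_nf
    linarith [h2.trans_eq h3]
  have hlog : Real.log (-h) ≤ (1/2 + c₅) - v := by
    have := Real.log_le_log (by linarith : (0:ℝ) < -h) hub2
    rwa [Real.log_exp] at this
  have hv2 : v ≤ (1/2 + c₅) - Real.log (-h) := by linarith
  have hu2 : u ^ 2 ≤ 2 * (1/2 + c₅) - Real.log (-h) := by nlinarith
  have hBnn : (0:ℝ) ≤ 2 * (1/2 + c₅) - Real.log (-h) := le_trans (sq_nonneg u) hu2
  constructor
  · constructor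
    · nlinarith [sq_nonneg (u + 1)]
    · nlinarith [sq_nonneg (u - 1)]
  · exact ⟨hv1, hv2⟩
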